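/- Let d ≥ 6 be an integer. Then ∫_0^1 w^{3/2} (1−w)^{(d−6)/2} (1 − w·(d+1)/4) dw = −(3√π · Γ(d/2 − 2)) / (16 · Γ((d+1)/2)), and in particular this integral is strictly negative. -/

import Mathlib

open Real Set

lemma realBeta (u v : ℝ) (hu : 0 < u) (hv : 0 < v) :
    ∫ x in (0:ℝ)..1, x ^ (u - 1) * (1 - x) ^ (v - 1)
      = Real.Gamma u * Real.Gamma v / Real.Gamma (u + v) := by
  have key := Complex.Gamma_mul_Gamma_eq_betaIntegral
    (s := (u : ℂ)) (t := (v : ℂ)) (by simpa using hu) (by simpa using hv)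
  have hbeta : Complex.betaIntegral (u : ℂ) (v : ℂ)
      = ((∫ x in (0:ℝ)..1, x ^ (u - 1) * (1 - x) ^ (v - 1) : ℝ) : ℂ) := by
    rw [Complex.betaIntegral, ← intervalIntegral.integral_ofReal]
    refine intervalIntegral.integral_congr fun x hx => ?_
    rw [uIcc_of_le (by norm_num : (0:ℝ) ≤ 1)] at hx
    push_cast
    rw [Complex.ofReal_cpow hx.1, Complex.ofReal_cpow (by linarith [hx.2])]
    push_cast
    ring
  rw [hbeta, ← Complex.ofReal_add, Complex.Gamma_ofReal, Complex.Gamma_ofReal,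
    Complex.Gamma_ofReal, ← Complex.ofReal_mul, ← Complex.ofReal_mul] at key
  have := Complex.ofReal_injective key
  have hpos : Real.Gamma (u + v) ≠ 0 := (Real.Gamma_pos_of_pos (by linarith)).ne'
  field_simp
  linarith [this]

/-- For an integer `d ≥ 6`,
`∫₀¹ w^{3/2} (1-w)^{(d-6)/2} (1 - w(d+1)/4) dw = -(3√π Γ(d/2-2))/(16 Γ((d+1)/2))`,
and in particular this integral is strictly negative. -/
theorem beta_integral_second_derivative_neg (d : ℕ) (hd : 6 ≤ d) :
    (∫ w in (0:ℝ)..1,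
        w ^ (3/2 : ℝ) * (1 - w) ^ (((d : ℝ) - 6) / 2) * (1 - w * ((d : ℝ) + 1) / 4))
      = -(3 * Real.sqrt Real.pi * Real.Gamma ((d : ℝ) / 2 - 2)) /
          (16 * Real.Gamma (((d : ℝ) + 1) / 2)) ∧
    (∫ w in (0:ℝ)..1,
        w ^ (3/2 : ℝ) * (1 - w) ^ (((d : ℝ) - 6) / 2) * (1 - w * ((d : ℝ) + 1) / 4))
      < 0 := by
  set c : ℝ := ((d : ℝ) - 6) / 2 with hc
  have hd6 : (6 : ℝ) ≤ (d : ℝ) := by exact_mod_cast hd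
  have hc0 : 0 ≤ c := by rw [hc]; linarith
  -- continuity
  have cont1 : Continuous fun w : ℝ => w ^ (3/2 : ℝ) * (1 - w) ^ c := by
    apply Continuous.mul
    · exact Real.continuous_rpow_const (by norm_num)
    · exact (Real.continuous_rpow_const (by norm_num [hc0] : 0 ≤ c)).comp
        (continuous_const.sub continuous_id)
  have cont2 : Continuous fun w : ℝ => w ^ (5/2 : ℝ) * (1 - w) ^ c := by
    apply Continuous.mul
    · exact Real.continuous_rpow_const (by norm_num)
    · exact (Real.continuous_rpow_const hc0).comp (continuous_const.sub continuous_id)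
  have heq : ∀ w ∈ uIcc (0:ℝ) 1,
      w ^ (3/2 : ℝ) * (1 - w) ^ c * (1 - w * ((d : ℝ) + 1) / 4)
      = w ^ (3/2 : ℝ) * (1 - w) ^ c
        - (((d : ℝ) + 1) / 4) * (w ^ (5/2 : ℝ) * (1 - w) ^ c) := by
    intro w hw
    rw [uIcc_of_le (by norm_num : (0:ℝ) ≤ 1)] at hw
    have h52 : w ^ (5/2 : ℝ) = w ^ (3/2 : ℝ) * w := by
      rcases eq_or_lt_of_le hw.1 with h | h
      · rw [← h]; norm_num [Real.zero_rpow]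
      · rw [← Real.rpow_add_one (ne_of_gt h)]; norm_num
    rw [h52]; ring
  have hsplit : (∫ w in (0:ℝ)..1,
        w ^ (3/2 : ℝ) * (1 - w) ^ c * (1 - w * ((d : ℝ) + 1) / 4))
      = (∫ w in (0:ℝ)..1, w ^ (3/2 : ℝ) * (1 - w) ^ c)
        - (((d : ℝ) + 1) / 4) * ∫ w in (0:ℝ)..1, w ^ (5/2 : ℝ) * (1 - w) ^ c := by
    rw [intervalIntegral.integral_congr heq, intervalIntegral.integral_sub
      (cont1.intervalIntegrable _ _) ((show Continuous fun w : ℝ => ((d:ℝ)+1)/4 * (w ^ (5/2 : ℝ) * (1 - w) ^ c) from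
        continuous_const.mul cont2).intervalIntegrable _ _),
      intervalIntegral.integral_const_mul]
  have hv : (0:ℝ) < ((d:ℝ) - 4) / 2 := by linarith
  have hb1 : (∫ w in (0:ℝ)..1, w ^ (3/2 : ℝ) * (1 - w) ^ c)
      = Real.Gamma (5/2) * Real.Gamma (((d:ℝ) - 4)/2) / Real.Gamma (((d:ℝ)+1)/2) := by
    have := realBeta (5/2) (((d:ℝ) - 4)/2) (by norm_num) hv
    rw [show (5/2 : ℝ) - 1 = 3/2 by norm_num,
      show ((d:ℝ) - 4)/2 - 1 = c by rw [hc]; ring,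
      show (5/2 : ℝ) + ((d:ℝ) - 4)/2 = ((d:ℝ)+1)/2 by ring] at this
    exact this
  have hb2 : (∫ w in (0:ℝ)..1, w ^ (5/2 : ℝ) * (1 - w) ^ c)
      = Real.Gamma (7/2) * Real.Gamma (((d:ℝ) - 4)/2) / Real.Gamma (((d:ℝ)+3)/2) := by
    have := realBeta (7/2) (((d:ℝ) - 4)/2) (by norm_num) hv
    rw [show (7/2 : ℝ) - 1 = 5/2 by norm_num,
      show ((d:ℝ) - 4)/2 - 1 = c by rw [hc]; ring,
      show (7/2 : ℝ) + ((d:ℝ) - 4)/2 = ((d:ℝ)+3)/2 by ring] at this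
    exact this
  -- Gamma computations
  have g52 : Real.Gamma (5/2) = 3/4 * Real.sqrt Real.pi := by
    rw [show (5/2 : ℝ) = 3/2 + 1 by norm_num, Real.Gamma_add_one (by norm_num),
      show (3/2 : ℝ) = 1/2 + 1 by norm_num, Real.Gamma_add_one (by norm_num),
      Real.Gamma_one_half_eq]
    ring
  have g72 : Real.Gamma (7/2) = 5/2 * Real.Gamma (5/2) := by
    rw [show (7/2 : ℝ) = 5/2 + 1 by norm_num, Real.Gamma_add_one (by norm_num)]
  have gd3 : Real.Gamma (((d:ℝ)+3)/2) = ((d:ℝ)+1)/2 * Real.Gamma (((d:ℝ)+1)/2) := by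
    rw [show ((d:ℝ)+3)/2 = ((d:ℝ)+1)/2 + 1 by ring, Real.Gamma_add_one (by positivity)]
  have gv : Real.Gamma (((d:ℝ) - 4)/2) = Real.Gamma ((d:ℝ)/2 - 2) := by
    ring_nf
  have hG1 : 0 < Real.Gamma (((d:ℝ)+1)/2) := Real.Gamma_pos_of_pos (by positivity)
  have hGv : 0 < Real.Gamma (((d:ℝ) - 4)/2) := Real.Gamma_pos_of_pos hv
  have hmain : (∫ w in (0:ℝ)..1,
        w ^ (3/2 : ℝ) * (1 - w) ^ c * (1 - w * ((d : ℝ) + 1) / 4))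
      = -(3 * Real.sqrt Real.pi * Real.Gamma ((d : ℝ) / 2 - 2)) /
          (16 * Real.Gamma (((d : ℝ) + 1) / 2)) := by
    rw [hsplit, hb1, hb2, g72, gd3, g52, ← gv]
    have hd1 : (0:ℝ) < (d:ℝ) + 1 := by linarith
    field_simp
    ring
  refine ⟨hmain, ?_⟩
  rw [hmain]
  have hπ : 0 < Real.sqrt Real.pi := Real.sqrt_pos.mpr Real.pi_pos
  rw [gv] at hGv
  apply div_neg_of_neg_of_pos
  · nlinarith
  · positivity
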